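/- For every constant c > 0 there exist a point p ∈ ℝ² and a radius r > 0 with closedBall(p, r) ⊆ [0,1]², such that every collection of at most three dyadic squares whose union contains closedBall(p, r) has total area greater than c·π·r² (i.e. greater than c times the area of the disk). -/

import Mathlib

open MeasureTheory Metric Set

/-- The dyadic square of level `k` with indices `a`, `b` in the unit square:
`[a·2⁻ᵏ, (a+1)·2⁻ᵏ] × [b·2⁻ᵏ, (b+1)·2⁻ᵏ]`. -/
def dyadicSquare (k a b : ℕ) : Set (EuclideanSpace ℝ (Fin 2)) :=
  {x | x 0 ∈ Icc ((a : ℝ) / 2 ^ k) (((a : ℝ) + 1) / 2 ^ k) ∧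
       x 1 ∈ Icc ((b : ℝ) / 2 ^ k) (((b : ℝ) + 1) / 2 ^ k)}

/-- The unit square `[0,1]²`. -/
def unitSquare : Set (EuclideanSpace ℝ (Fin 2)) := {x | ∀ i, x i ∈ Icc (0 : ℝ) 1}

lemma volume_dyadicSquare_zero : volume (dyadicSquare 0 0 0) = 1 := by
  have h : dyadicSquare 0 0 0 =
      (MeasurableEquiv.toLp 2 (Fin 2 → ℝ)).symm ⁻¹' (univ.pi fun _ : Fin 2 => Icc (0:ℝ) 1) := by
    ext x
    have heq : ∀ i, (MeasurableEquiv.toLp 2 (Fin 2 → ℝ)).symm x i = x i := fun _ => rfl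
    simp only [dyadicSquare, mem_setOf_eq, mem_preimage, mem_pi, mem_univ, forall_true_left, heq, Fin.forall_fin_two, mem_Icc]
    norm_num
  rw [h, (EuclideanSpace.volume_preserving_symm_measurableEquiv_toLp (Fin 2)).measure_preimage
    (MeasurableSet.univ_pi fun _ => measurableSet_Icc).nullMeasurableSet,
    volume_pi_pi]
  simp [Real.volume_Icc]

lemma level_zero {k a : ℕ} (ha : a < 2 ^ k) {u v : ℝ}
    (hu : u ∈ Icc ((a : ℝ) / 2 ^ k) (((a : ℝ) + 1) / 2 ^ k))
    (hv : v ∈ Icc ((a : ℝ) / 2 ^ k) (((a : ℝ) + 1) / 2 ^ k))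
    (hu2 : u < 1 / 2) (hv2 : 1 / 2 < v) : k = 0 := by
  by_contra hk
  obtain ⟨m, rfl⟩ := Nat.exists_eq_succ_of_ne_zero hk
  have h2 : (0:ℝ) < 2 ^ (m + 1) := by positivity
  have h1 : (a : ℝ) < 2 ^ m := by
    have := lt_of_le_of_lt hu.1 hu2
    rw [div_lt_iff₀ h2] at this
    calc (a:ℝ) < 1 / 2 * 2 ^ (m+1) := this
    _ = 2 ^ m := by ring
  have h2' : (2:ℝ) ^ m < (a:ℝ) + 1 := by
    have := lt_of_lt_of_le hv2 hv.2
    rw [lt_div_iff₀ h2] at this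
    calc (2:ℝ)^m = 1 / 2 * 2 ^ (m+1) := by ring
    _ < (a:ℝ) + 1 := this
  have ha1 : a < 2 ^ m := by exact_mod_cast h1
  have ha2 : 2 ^ m < a + 1 := by exact_mod_cast h2'
  omega

set_option maxHeartbeats 1000000 in
/-- Lower bound: no three dyadic squares of relatively small total area can always
cover a disk; i.e. the uniform square tiling has Arrwwid number at least four. -/
theorem square_tiling_arrwwid_lower_bound (c : ℝ) (hc : 0 < c) :
    ∃ (p : EuclideanSpace ℝ (Fin 2)) (r : ℝ), 0 < r ∧ closedBall p r ⊆ unitSquare ∧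
      ∀ S : Finset (ℕ × ℕ × ℕ), S.card ≤ 3 →
        (∀ q ∈ S, q.2.1 < 2 ^ q.1 ∧ q.2.2 < 2 ^ q.1) →
        closedBall p r ⊆ ⋃ q ∈ S, dyadicSquare q.1 q.2.1 q.2.2 →
        ENNReal.ofReal (c * Real.pi * r ^ 2) <
          ∑ q ∈ S, volume (dyadicSquare q.1 q.2.1 q.2.2) := by
  set p : EuclideanSpace ℝ (Fin 2) := WithLp.toLp 2 (fun _ => (1/2 : ℝ)) with hp
  set r : ℝ := min (1/2) (1 + c * Real.pi)⁻¹ with hr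
  have hπ : (0:ℝ) < Real.pi := Real.pi_pos
  have hr0 : 0 < r := lt_min (by norm_num) (by positivity)
  have hr12 : r ≤ 1/2 := min_le_left _ _
  refine ⟨p, r, hr0, ?_, ?_⟩
  · -- ball in unit square
    intro x hx i
    have hd : dist (x i) (p i) ≤ dist x p := by
      rw [EuclideanSpace.dist_eq]
      have : dist (x i) (p i) ^ 2 ≤ ∑ j, dist (x j) (p j) ^ 2 :=
        Finset.single_le_sum (f := fun j => dist (x j) (p j) ^ 2)
          (fun j _ => sq_nonneg _) (Finset.mem_univ i)
      calc dist (x i) (p i) = Real.sqrt (dist (x i) (p i) ^ 2) := by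
            rw [Real.sqrt_sq dist_nonneg]
        _ ≤ _ := Real.sqrt_le_sqrt this
    have : dist (x i) (1/2 : ℝ) ≤ 1/2 := le_trans hd (le_trans hx hr12)
    rw [Real.dist_eq] at this
    obtain ⟨h1, h2⟩ := abs_le.1 this
    exact ⟨by linarith, by linarith⟩
  · intro S hS3 hrange hcov
    -- four points
    set s : ℝ := r / 2 with hs
    have hs0 : 0 < s := by positivity
    set e : Bool → ℝ := fun t => if t then s else -s with he
    set pt : Bool × Bool → EuclideanSpace ℝ (Fin 2) :=
      fun b => WithLp.toLp 2 ![1/2 + e b.1, 1/2 + e b.2] with hpt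
    have hptball : ∀ b, pt b ∈ closedBall p r := by
      intro b
      rw [mem_closedBall, EuclideanSpace.dist_eq]
      have he2 : ∀ t, e t ^ 2 = s ^ 2 := by
        intro t; cases t <;> simp [he] <;> ring
      have : ∑ j, dist (pt b j) (p j) ^ 2 = 2 * s ^ 2 := by
        rw [Fin.sum_univ_two]
        simp only [hpt, hp, PiLp.toLp_apply, Real.dist_eq, Matrix.cons_val_zero, Matrix.cons_val_one,
          Matrix.head_cons]
        rw [sq_abs, sq_abs]
        have : (1/2 + e b.1 - 1/2) = e b.1 := by ring
        rw [this]
        have : (1/2 + e b.2 - 1/2) = e b.2 := by ring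
        rw [this, he2, he2]; ring
      rw [this]
      have h1 : 2 * s ^ 2 ≤ r ^ 2 := by rw [hs]; nlinarith [sq_nonneg r]
      calc Real.sqrt (2 * s ^ 2) ≤ Real.sqrt (r ^ 2) := Real.sqrt_le_sqrt h1
        _ = r := Real.sqrt_sq hr0.le
    -- choose covering square for each point
    have hchoose : ∀ b : Bool × Bool, ∃ q ∈ S,
        pt b ∈ dyadicSquare q.1 q.2.1 q.2.2 := by
      intro b
      have := hcov (hptball b)
      simpa using this
    choose f hfS hfmem using hchoose
    obtain ⟨b₁, -, b₂, -, hne, heq⟩ :=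
      Finset.exists_ne_map_eq_of_card_lt_of_maps_to
        (s := (Finset.univ : Finset (Bool × Bool))) (t := S)
        (by simpa using lt_of_le_of_lt hS3 (by norm_num : (3:ℕ) < 4))
        (fun b _ => hfS b)
    -- the common square is the level-0 square
    have hmem1 : pt b₁ ∈ dyadicSquare (f b₁).1 (f b₁).2.1 (f b₁).2.2 := hfmem b₁
    have hmem2 : pt b₂ ∈ dyadicSquare (f b₁).1 (f b₁).2.1 (f b₁).2.2 := by
      rw [heq]; exact hfmem b₂
    have hk0 : (f b₁).1 = 0 := by
      have hcoord : b₁.1 ≠ b₂.1 ∨ b₁.2 ≠ b₂.2 := by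
        by_contra h
        push_neg at h
        exact hne (Prod.ext h.1 h.2)
      have hef : e false = -s := by simp [he]
      have het : e true = s := by simp [he]
      have hlt : ∀ t₁ t₂ : Bool, t₁ ≠ t₂ →
          (1/2 + e t₁ < 1/2 ∧ 1/2 < 1/2 + e t₂) ∨
          (1/2 + e t₂ < 1/2 ∧ 1/2 < 1/2 + e t₁) := by
        intro t₁ t₂ h
        cases t₁ <;> cases t₂
        · exact absurd rfl h
        · exact Or.inl ⟨by rw [hef]; linarith, by rw [het]; linarith⟩
        · exact Or.inr ⟨by rw [hef]; linarith, by rw [het]; linarith⟩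
        · exact absurd rfl h
      rcases hcoord with h | h
      · have h1 := hmem1.1; have h2 := hmem2.1
        simp only [hpt, PiLp.toLp_apply, Matrix.cons_val_zero] at h1 h2
        rcases hlt _ _ h with ⟨hu, hv⟩ | ⟨hu, hv⟩
        · exact level_zero (hrange (f b₁) (hfS b₁)).1 h1 h2 hu hv
        · exact level_zero (hrange (f b₁) (hfS b₁)).1 h2 h1 hu hv
      · have h1 := hmem1.2; have h2 := hmem2.2
        simp only [hpt, PiLp.toLp_apply, Matrix.cons_val_one, Matrix.head_cons] at h1 h2
        rcases hlt _ _ h with ⟨hu, hv⟩ | ⟨hu, hv⟩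
        · exact level_zero (hrange (f b₁) (hfS b₁)).2 h1 h2 hu hv
        · exact level_zero (hrange (f b₁) (hfS b₁)).2 h2 h1 hu hv
    have ha0 : (f b₁).2.1 = 0 := by
      have := (hrange (f b₁) (hfS b₁)).1; rw [hk0] at this; omega
    have hb0 : (f b₁).2.2 = 0 := by
      have := (hrange (f b₁) (hfS b₁)).2; rw [hk0] at this; omega
    have hq00 : f b₁ = (0, 0, 0) := Prod.ext_iff.2 ⟨hk0, Prod.ext_iff.2 ⟨ha0, hb0⟩⟩
    have hsum : (1 : ENNReal) ≤ ∑ q ∈ S, volume (dyadicSquare q.1 q.2.1 q.2.2) := by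
      have hsle := Finset.single_le_sum
        (f := fun q : ℕ × ℕ × ℕ => volume (dyadicSquare q.1 q.2.1 q.2.2))
        (fun _ _ => zero_le) (hfS b₁)
      rw [hq00] at hsle
      rw [volume_dyadicSquare_zero] at hsle
      exact hsle
    have hlt1 : ENNReal.ofReal (c * Real.pi * r ^ 2) < 1 := by
      rw [show (1 : ENNReal) = ENNReal.ofReal 1 by simp]
      apply ENNReal.ofReal_lt_ofReal_iff_of_nonneg (by positivity) |>.2
      have hrle : r ≤ (1 + c * Real.pi)⁻¹ := min_le_right _ _
      have hr1 : r ≤ 1 := le_trans hr12 (by norm_num)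
      have h1 : r ^ 2 ≤ r := by nlinarith
      have h2 : c * Real.pi * r ≤ c * Real.pi * (1 + c * Real.pi)⁻¹ := by
        apply mul_le_mul_of_nonneg_left hrle (by positivity)
      have h3 : c * Real.pi * (1 + c * Real.pi)⁻¹ < 1 := by
        have h0 : (0:ℝ) < 1 + c * Real.pi := by positivity
        rw [← div_eq_mul_inv, div_lt_one h0]
        linarith
      nlinarith [mul_le_mul_of_nonneg_left h1 (by positivity : (0:ℝ) ≤ c * Real.pi)]
    exact lt_of_lt_of_le hlt1 hsum
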